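/- For continuous functions f, g on the circle, the operator T_f T_g − T_{fg} on the Hardy space is compact; consequently, if f is invertible in C(S¹), then the Toeplitz operator T_f is Fredholm. -/

import Mathlib

open MeasureTheory AddCircle

instance : Fact ((0 : ℝ) < 2 * Real.pi) := ⟨by positivity⟩

/-- The space `L²(S¹)` of square-integrable functions on the circle (of length `2π`). -/
noncomputable abbrev L2Circle : Type :=
  Lp ℂ 2 (@haarAddCircle (2 * Real.pi) _)

/-- The Hardy space `H²(S¹) ⊆ L²(S¹)`: the closed span of the Fourier monomials `zⁿ`, `n ≥ 0`. -/
noncomputable def hardySpace : Submodule ℂ L2Circle :=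
  (Submodule.span ℂ (Set.range fun n : ℕ => (fourierLp 2 (n : ℤ) : L2Circle))).topologicalClosure

instance : CompleteSpace hardySpace :=
  IsClosed.completeSpace_coe (hs := Submodule.isClosed_topologicalClosure _)

/-- The Toeplitz operator on the Hardy space associated to a multiplication operator `M` on
`L²(S¹)`: the compression `P ∘ M` of `M` to the Hardy space. -/
noncomputable def toeplitz (M : L2Circle →L[ℂ] L2Circle) : hardySpace →L[ℂ] hardySpace :=
  hardySpace.orthogonalProjectionOnto ∘L M ∘L hardySpace.subtypeL

/-- A bounded operator on a Hilbert space is *Fredholm* if its kernel is finite dimensional,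
its range is closed, and its cokernel is finite dimensional. -/
def IsFredholm {H : Type} [NormedAddCommGroup H] [InnerProductSpace ℂ H] [CompleteSpace H]
    (T : H →L[ℂ] H) : Prop :=
  FiniteDimensional ℂ (LinearMap.ker (T : H →ₗ[ℂ] H)) ∧ IsClosed (LinearMap.range (T : H →ₗ[ℂ] H) : Set H) ∧
    FiniteDimensional ℂ (H ⧸ LinearMap.range (T : H →ₗ[ℂ] H))

namespace ToeplitzAux

theorem memLp_mul (h : C(AddCircle (2 * Real.pi), ℂ)) (u : L2Circle) :
    MemLp (fun x => h x * u x) 2 (@haarAddCircle (2 * Real.pi) _) := by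
  refine (Lp.memLp u).of_le_mul (c := ‖h‖)
    (h.continuous.aestronglyMeasurable.mul (Lp.aestronglyMeasurable u))
    (Filter.Eventually.of_forall fun x => ?_)
  rw [norm_mul]
  exact mul_le_mul_of_nonneg_right (h.norm_coe_le_norm x) (norm_nonneg _)

noncomputable def mulOp (h : C(AddCircle (2 * Real.pi), ℂ)) : L2Circle →L[ℂ] L2Circle :=
  LinearMap.mkContinuous
    { toFun := fun u => (memLp_mul h u).toLp (fun x => h x * u x)
      map_add' := fun u v => by
        rw [← MemLp.toLp_add]
        refine (MemLp.toLp_eq_toLp_iff _ _).2 ?_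
        filter_upwards [AEEqFun.coeFn_add (u : _ →ₘ[@haarAddCircle (2 * Real.pi) _] ℂ) (v : _ →ₘ[@haarAddCircle (2 * Real.pi) _] ℂ)] with x e
        simp [e, mul_add]
      map_smul' := fun c u => by
        simp only [RingHom.id_apply]
        rw [← MemLp.toLp_const_smul]
        refine (MemLp.toLp_eq_toLp_iff _ _).2 ?_
        filter_upwards [Lp.coeFn_smul c u] with x e
        simp [e, smul_eq_mul]
        ring }
    ‖h‖ (fun u => by
      refine le_trans (le_of_eq ?_) (Lp.norm_le_mul_norm_of_ae_le_mul (c := ‖h‖) (f := (memLp_mul h u).toLp _) (g := u) ?_)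
      · rfl
      · filter_upwards [(memLp_mul h u).coeFn_toLp] with x e1
        rw [e1, norm_mul]
        exact mul_le_mul_of_nonneg_right (h.norm_coe_le_norm x) (norm_nonneg _))

theorem coeFn_mulOp (h : C(AddCircle (2 * Real.pi), ℂ)) (u : L2Circle) :
    (mulOp h u : AddCircle (2 * Real.pi) → ℂ) =ᵐ[haarAddCircle] fun x => h x * u x :=
  (memLp_mul h u).coeFn_toLp

theorem mulOp_unique {h : C(AddCircle (2 * Real.pi), ℂ)} {M : L2Circle →L[ℂ] L2Circle}
    (hM : ∀ u : L2Circle,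
      (M u : AddCircle (2 * Real.pi) → ℂ) =ᵐ[haarAddCircle] fun x => h x * u x) :
    M = mulOp h := by
  ext u : 1
  exact Lp.ext ((hM u).trans (coeFn_mulOp h u).symm)

theorem mulOp_one : mulOp 1 = ContinuousLinearMap.id ℂ L2Circle := by
  refine (mulOp_unique fun u => ?_).symm
  filter_upwards with x
  simp

theorem mulOp_mul (a b : C(AddCircle (2 * Real.pi), ℂ)) :
    mulOp (a * b) = mulOp a ∘L mulOp b := by
  refine (mulOp_unique fun u => ?_).symm
  filter_upwards [coeFn_mulOp a (mulOp b u), coeFn_mulOp b u] with x e1 e2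
  simp [e1, e2, mul_assoc]

theorem norm_mulOp_le (h : C(AddCircle (2 * Real.pi), ℂ)) : ‖mulOp h‖ ≤ ‖h‖ :=
  LinearMap.mkContinuous_norm_le _ (norm_nonneg h) _

/-- adjoint of multiplication is multiplication by the conjugate -/
theorem adjoint_mulOp (h : C(AddCircle (2 * Real.pi), ℂ)) :
    ContinuousLinearMap.adjoint (mulOp h) = mulOp (star h) := by
  symm
  rw [ContinuousLinearMap.eq_adjoint_iff]
  intro u v
  rw [L2.inner_def, L2.inner_def]
  refine integral_congr_ae ?_
  filter_upwards [coeFn_mulOp (star h) u, coeFn_mulOp h v] with x e1 e2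
  simp only [e1, e2, RCLike.inner_apply, ContinuousMap.coe_star, Pi.star_apply, map_mul,
    RCLike.star_def, RingHomCompTriple.comp_apply, Complex.conj_conj, RingHom.id_apply]
  ring

theorem mulOp_fourier_apply (n m : ℤ) :
    mulOp (fourier n) (fourierLp 2 m) = (fourierLp 2 (n + m) : L2Circle) := by
  refine Lp.ext ?_
  filter_upwards [coeFn_mulOp (fourier n) (fourierLp 2 m),
    coeFn_fourierLp (T := 2 * Real.pi) 2 m, coeFn_fourierLp (T := 2 * Real.pi) 2 (n + m)]
    with x e1 e2 e3
  rw [e1, e2, e3, fourier_add]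

end ToeplitzAux

namespace ToeplitzAux2
open ToeplitzAux

theorem fourierLp_mem_hardySpace {m : ℤ} (hm : 0 ≤ m) :
    (fourierLp 2 m : L2Circle) ∈ hardySpace :=
  Submodule.le_topologicalClosure _
    (Submodule.subset_span ⟨m.toNat, by simp [Int.toNat_of_nonneg hm]⟩)

theorem fourierLp_mem_orthogonal {m : ℤ} (hm : m < 0) :
    (fourierLp 2 m : L2Circle) ∈ hardySpaceᗮ := by
  rw [Submodule.mem_orthogonal']
  intro u hu
  have hle : hardySpace ≤ LinearMap.ker ((innerSL ℂ (fourierLp 2 m : L2Circle)) : L2Circle →ₗ[ℂ] ℂ) := by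
    refine Submodule.topologicalClosure_minimal _ ?_
      (ContinuousLinearMap.isClosed_ker _)
    rw [Submodule.span_le]
    rintro - ⟨k, rfl⟩
    have := orthonormal_iff_ite.mp (@orthonormal_fourier (2 * Real.pi) _) m (k : ℤ)
    simp only [SetLike.mem_coe, LinearMap.mem_ker, ContinuousLinearMap.coe_coe, innerSL_apply_apply]
    rw [this, if_neg (by omega)]
  have := hle hu
  simpa using this

theorem proj_fourierLp_neg {m : ℤ} (hm : m < 0) :
    hardySpace.orthogonalProjectionOnto (fourierLp 2 m : L2Circle) = 0 :=
  Submodule.orthogonalProjectionOnto_apply_of_mem_orthogonal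
    (fourierLp_mem_orthogonal hm)

/-- An operator with range in a finite dimensional subspace is compact. -/
theorem isCompactOperator_of_range_le {H1 H2 : Type*} [NormedAddCommGroup H1]
    [NormedAddCommGroup H2] [NormedSpace ℂ H1] [NormedSpace ℂ H2] (T : H1 →L[ℂ] H2)
    (V : Submodule ℂ H2) [FiniteDimensional ℂ V] (hV : ∀ x, T x ∈ V) :
    IsCompactOperator T := by
  haveI : ProperSpace V := FiniteDimensional.proper ℂ V
  refine ⟨Subtype.val '' Metric.closedBall (0 : V) ‖T‖,
    (isCompact_closedBall _ _).image continuous_subtype_val, ?_⟩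
  refine Filter.mem_of_superset (Metric.closedBall_mem_nhds (0 : H1) one_pos) ?_
  intro x hx
  refine ⟨⟨T x, hV x⟩, ?_, rfl⟩
  rw [Metric.mem_closedBall, dist_zero_right]
  calc ‖(⟨T x, hV x⟩ : V)‖ = ‖T x‖ := rfl
    _ ≤ ‖T‖ * ‖x‖ := T.le_opNorm x
    _ ≤ ‖T‖ * 1 := by
        refine mul_le_mul_of_nonneg_left ?_ (norm_nonneg T)
        simpa [dist_zero_right] using hx
    _ = ‖T‖ := mul_one _

noncomputable def hankelFull (M : L2Circle →L[ℂ] L2Circle) : L2Circle →L[ℂ] L2Circle :=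
  (ContinuousLinearMap.id ℂ L2Circle
    - hardySpace.subtypeL ∘L hardySpace.orthogonalProjectionOnto) ∘L M

noncomputable def hankel (h : C(AddCircle (2 * Real.pi), ℂ)) : hardySpace →L[ℂ] L2Circle :=
  hankelFull (mulOp h) ∘L hardySpace.subtypeL

theorem hankel_fourier_isCompact (n : ℤ) : IsCompactOperator ⇑(hankel (fourier n)) := by
  set V : Submodule ℂ L2Circle :=
    Submodule.span ℂ ((fun m : ℤ => (fourierLp 2 m : L2Circle)) '' Set.Ico n 0) with hVdef
  haveI : FiniteDimensional ℂ V :=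
    FiniteDimensional.span_of_finite ℂ ((Set.finite_Ico n 0).image _)
  refine isCompactOperator_of_range_le _ V fun u => ?_
  have key : hardySpace ≤ V.comap (hankelFull (mulOp (fourier n)) :
      L2Circle →ₗ[ℂ] L2Circle) := by
    refine Submodule.topologicalClosure_minimal _ ?_
      ((Submodule.closed_of_finiteDimensional V).preimage
        (hankelFull (mulOp (fourier n))).continuous)
    rw [Submodule.span_le]
    rintro - ⟨k, rfl⟩
    simp only [SetLike.mem_coe, Submodule.mem_comap, ContinuousLinearMap.coe_coe]
    have happ : hankelFull (mulOp (fourier n)) (fourierLp 2 (k : ℤ)) =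
        fourierLp 2 (n + k) - hardySpace.subtypeL
          (hardySpace.orthogonalProjectionOnto (fourierLp 2 (n + k) : L2Circle)) := by
      simp [hankelFull, mulOp_fourier_apply]
    rcases lt_or_ge (n + (k : ℤ)) 0 with hnk | hnk
    · rw [happ, proj_fourierLp_neg hnk]
      simp only [map_zero, sub_zero]
      exact Submodule.subset_span ⟨n + k, ⟨by omega, hnk⟩, rfl⟩
    · rw [happ]
      have : (hardySpace.subtypeL (hardySpace.orthogonalProjectionOnto
          (fourierLp 2 (n + k) : L2Circle)) : L2Circle) = fourierLp 2 (n + k) :=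
        Submodule.starProjection_eq_self_iff.2 (fourierLp_mem_hardySpace hnk)
      rw [this, sub_self]
      exact V.zero_mem
  exact key u.2

theorem mulOp_add (a b : C(AddCircle (2 * Real.pi), ℂ)) :
    mulOp (a + b) = mulOp a + mulOp b := by
  refine (mulOp_unique fun u => ?_).symm
  filter_upwards [AEEqFun.coeFn_add ((mulOp a u) : _ →ₘ[@haarAddCircle (2 * Real.pi) _] ℂ)
    ((mulOp b u) : _ →ₘ[@haarAddCircle (2 * Real.pi) _] ℂ), coeFn_mulOp a u, coeFn_mulOp b u]
    with x e1 e2 e3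
  simp [e1, e2, e3, add_mul]

theorem mulOp_smul (c : ℂ) (a : C(AddCircle (2 * Real.pi), ℂ)) :
    mulOp (c • a) = c • mulOp a := by
  refine (mulOp_unique fun u => ?_).symm
  filter_upwards [Lp.coeFn_smul c (mulOp a u), coeFn_mulOp a u] with x e1 e2
  simp [e1, e2, mul_assoc]

theorem norm_hankel_le (h : C(AddCircle (2 * Real.pi), ℂ)) : ‖hankel h‖ ≤ 2 * ‖h‖ := by
  have h1 : ‖(ContinuousLinearMap.id ℂ L2Circle
      - hardySpace.subtypeL ∘L hardySpace.orthogonalProjectionOnto)‖ ≤ 2 := by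
    refine (norm_sub_le _ _).trans ?_
    have h2 : ‖hardySpace.subtypeL ∘L hardySpace.orthogonalProjectionOnto‖ ≤ 1 := by
      refine (ContinuousLinearMap.opNorm_comp_le _ _).trans ?_
      calc ‖hardySpace.subtypeL‖ * ‖hardySpace.orthogonalProjectionOnto‖
          ≤ 1 * 1 := mul_le_mul (Submodule.norm_subtypeL_le _)
            (Submodule.orthogonalProjectionOnto_norm_le _) (ContinuousLinearMap.opNorm_nonneg _) zero_le_one
        _ = 1 := one_mul 1
    have : ‖ContinuousLinearMap.id ℂ L2Circle‖ ≤ 1 := ContinuousLinearMap.norm_id_le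
    linarith
  calc ‖hankel h‖ ≤ ‖hankelFull (mulOp h)‖ * ‖hardySpace.subtypeL‖ :=
        ContinuousLinearMap.opNorm_comp_le _ _
    _ ≤ ‖hankelFull (mulOp h)‖ * 1 :=
        mul_le_mul_of_nonneg_left (Submodule.norm_subtypeL_le _) (norm_nonneg _)
    _ = ‖hankelFull (mulOp h)‖ := mul_one _
    _ ≤ 2 * ‖mulOp h‖ := by
        refine (ContinuousLinearMap.opNorm_comp_le _ _).trans ?_
        exact mul_le_mul_of_nonneg_right h1 (norm_nonneg _)
    _ ≤ 2 * ‖h‖ := by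
        have := norm_mulOp_le h
        nlinarith [norm_nonneg (mulOp h)]

noncomputable instance fastNS : NormedSpace ℂ hardySpace := Submodule.normedSpace _

theorem mulOp_sub (a b : C(AddCircle (2 * Real.pi), ℂ)) :
    mulOp (a - b) = mulOp a - mulOp b := by
  have : a - b + b = a := by ring
  rw [eq_sub_iff_add_eq, ← mulOp_add, this]

theorem hankel_add (a b : C(AddCircle (2 * Real.pi), ℂ)) :
    hankel (a + b) = hankel a + hankel b := by
  simp only [hankel, hankelFull, mulOp_add]
  ext u
  simp

theorem hankel_smul (c : ℂ) (a : C(AddCircle (2 * Real.pi), ℂ)) :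
    hankel (c • a) = c • hankel a := by
  simp only [hankel, hankelFull, mulOp_smul]
  ext u
  simp

theorem hankel_sub (a b : C(AddCircle (2 * Real.pi), ℂ)) :
    hankel (a - b) = hankel a - hankel b := by
  simp only [hankel, hankelFull, mulOp_sub]
  ext u
  simp

theorem hankel_zero : hankel 0 = 0 := by
  have := hankel_sub 0 0
  simpa using this

theorem lipschitz_hankel : LipschitzWith 2 hankel := by
  refine LipschitzWith.of_dist_le_mul fun a b => ?_
  rw [dist_eq_norm, dist_eq_norm, ← hankel_sub]
  simpa using norm_hankel_le (a - b)

theorem hankel_isCompact (h : C(AddCircle (2 * Real.pi), ℂ)) :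
    IsCompactOperator ⇑(hankel h) := by
  have htop : h ∈ (Submodule.span ℂ (Set.range (@fourier (2 * Real.pi)))).topologicalClosure := by
    rw [span_fourier_closure_eq_top]; trivial
  have hsub : ((Submodule.span ℂ (Set.range (@fourier (2 * Real.pi)))) :
      Set C(AddCircle (2 * Real.pi), ℂ)) ⊆
      hankel ⁻¹' { T : hardySpace →L[ℂ] L2Circle | IsCompactOperator T } := by
    intro a ha
    induction ha using Submodule.span_induction with
    | mem x hx =>
      obtain ⟨n, rfl⟩ := hx
      exact hankel_fourier_isCompact n
    | zero =>
      simp only [Set.mem_preimage, hankel_zero]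
      exact isCompactOperator_zero
    | add x y _ _ hx hy =>
      simp only [Set.mem_preimage, hankel_add] at *
      exact hx.add hy
    | smul c x _ hx =>
      simp only [Set.mem_preimage, hankel_smul] at *
      exact hx.smul c
  have hclosed : IsClosed (hankel ⁻¹' { T : hardySpace →L[ℂ] L2Circle | IsCompactOperator T }) :=
    isClosed_setOf_isCompactOperator.preimage lipschitz_hankel.continuous
  have h2 : h ∈ closure ((Submodule.span ℂ (Set.range (@fourier (2 * Real.pi)))) :
      Set C(AddCircle (2 * Real.pi), ℂ)) := by
    rw [← Submodule.topologicalClosure_coe]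
    exact htop
  exact closure_minimal hsub hclosed h2

theorem toeplitz_id : toeplitz (ContinuousLinearMap.id ℂ L2Circle) = 1 := by
  ext u : 1
  simp only [toeplitz, ContinuousLinearMap.comp_apply, ContinuousLinearMap.coe_id',
    id_eq, ContinuousLinearMap.one_apply, Submodule.subtypeL_apply,
    ContinuousLinearMap.id_apply]
  exact Submodule.orthogonalProjectionOnto_mem_subspace_eq_self u

set_option maxHeartbeats 2000000 in
theorem toeplitz_mul_sub (a b : C(AddCircle (2 * Real.pi), ℂ)) :
    toeplitz (mulOp a) ∘L toeplitz (mulOp b) - toeplitz (mulOp (a * b)) =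
      -((hardySpace.orthogonalProjectionOnto ∘L mulOp a) ∘L hankel b) := by
  rw [mulOp_mul]
  ext u
  simp only [ContinuousLinearMap.sub_apply, ContinuousLinearMap.comp_apply,
    ContinuousLinearMap.neg_apply, toeplitz, hankel, hankelFull,
    ContinuousLinearMap.id_apply, map_sub]
  abel_nf
  exact Filter.EventuallyEq.rfl

theorem toeplitz_mul_sub_isCompact (a b : C(AddCircle (2 * Real.pi), ℂ)) :
    IsCompactOperator ⇑(toeplitz (mulOp a) ∘L toeplitz (mulOp b) - toeplitz (mulOp (a * b))) := by
  rw [toeplitz_mul_sub]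
  have h1 : IsCompactOperator
      (⇑(hardySpace.orthogonalProjectionOnto ∘L mulOp a) ∘ ⇑(hankel b)) :=
    (hankel_isCompact b).continuous_comp
      (hardySpace.orthogonalProjectionOnto ∘L mulOp a).continuous
  have h2 : IsCompactOperator
      ⇑((hardySpace.orthogonalProjectionOnto ∘L mulOp a) ∘L hankel b) := by
    rwa [ContinuousLinearMap.coe_comp']
  have h3 := h2.neg
  rwa [show -⇑((hardySpace.orthogonalProjectionOnto ∘L mulOp a) ∘L hankel b) =
    ⇑(-((hardySpace.orthogonalProjectionOnto ∘L mulOp a) ∘L hankel b)) from rfl] at h3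

theorem adjoint_toeplitz (M : L2Circle →L[ℂ] L2Circle) :
    ContinuousLinearMap.adjoint (toeplitz M) = toeplitz (ContinuousLinearMap.adjoint M) := by
  simp only [toeplitz, ContinuousLinearMap.adjoint_comp, Submodule.adjoint_subtypeL,
    Submodule.adjoint_orthogonalProjectionOnto, ContinuousLinearMap.comp_assoc]

section Fredholm

variable {H : Type} [NormedAddCommGroup H] [InnerProductSpace ℂ H] [CompleteSpace H]

theorem ker_finiteDimensional (T S : H →L[ℂ] H)
    (hK : IsCompactOperator ⇑(S ∘L T - 1)) : FiniteDimensional ℂ (LinearMap.ker (T : H →ₗ[ℂ] H)) := by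
  set A : H →L[ℂ] H := S ∘L T - 1 with hA
  have hker : ∀ x ∈ LinearMap.ker (T : H →ₗ[ℂ] H), A x = -x := by
    intro x hx
    rw [LinearMap.mem_ker, ContinuousLinearMap.coe_coe] at hx
    simp [hA, ContinuousLinearMap.sub_apply, ContinuousLinearMap.comp_apply, hx]
  obtain ⟨C, hCc, hC⟩ := hK.image_closedBall_subset_compact 1
  set B : Set H := Subtype.val '' (Metric.closedBall (0 : LinearMap.ker (T : H →ₗ[ℂ] H)) 1) with hB
  have hBdesc : B = {x : H | x ∈ LinearMap.ker (T : H →ₗ[ℂ] H) ∧ ‖x‖ ≤ 1} := by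
    ext x
    constructor
    · rintro ⟨⟨y, hy⟩, hmem, rfl⟩
      refine ⟨hy, ?_⟩
      simpa [Metric.mem_closedBall, dist_zero_right] using hmem
    · rintro ⟨h1, h2⟩
      exact ⟨⟨x, h1⟩, by simpa [Metric.mem_closedBall, dist_zero_right] using h2, rfl⟩
  have hBC : B ⊆ Neg.neg '' C := by
    intro x hx
    rw [hBdesc] at hx
    refine ⟨A x, hC ⟨x, by simpa [Metric.mem_closedBall, dist_zero_right] using hx.2, rfl⟩, ?_⟩
    rw [hker x hx.1, neg_neg]
  have hBclosed : IsClosed B := by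
    rw [hBdesc]
    have : {x : H | x ∈ LinearMap.ker (T : H →ₗ[ℂ] H) ∧ ‖x‖ ≤ 1} =
        (LinearMap.ker (T : H →ₗ[ℂ] H) : Set H) ∩ Metric.closedBall 0 1 := by
      ext x; simp [Metric.mem_closedBall, dist_zero_right]
    rw [this]
    exact T.isClosed_ker.inter Metric.isClosed_closedBall
  have hBcompact : IsCompact B :=
    IsCompact.of_isClosed_subset (hCc.image continuous_neg) hBclosed hBC
  have hball : IsCompact (Metric.closedBall (0 : LinearMap.ker (T : H →ₗ[ℂ] H)) 1) := by
    rw [Topology.IsEmbedding.subtypeVal.isCompact_iff]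
    exact hBcompact
  exact FiniteDimensional.of_isCompact_closedBall₀ (𝕜 := ℂ) one_pos hball

theorem range_isClosed (T S : H →L[ℂ] H)
    (hK : IsCompactOperator ⇑(S ∘L T - 1)) : IsClosed (LinearMap.range (T : H →ₗ[ℂ] H) : Set H) := by
  set A : H →L[ℂ] H := S ∘L T - 1 with hA
  set N : Submodule ℂ H := LinearMap.ker (T : H →ₗ[ℂ] H) with hN
  set M : Submodule ℂ H := Nᗮ with hM
  haveI : CompleteSpace N := T.isClosed_ker.completeSpace_coe
  haveI : CompleteSpace M := N.isClosed_orthogonal.completeSpace_coe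
  obtain ⟨C, hCc, hC⟩ := hK.image_closedBall_subset_compact 1
  -- T is bounded below on M
  have hbdd : ∃ c : ℝ, 0 < c ∧ ∀ x ∈ M, c * ‖x‖ ≤ ‖T x‖ := by
    by_contra hcon
    push_neg at hcon
    have hseq : ∀ n : ℕ, ∃ y : H, y ∈ M ∧ ‖y‖ = 1 ∧ ‖T y‖ < (n + 1 : ℝ)⁻¹ := by
      intro n
      obtain ⟨x, hxM, hxlt⟩ := hcon (n + 1 : ℝ)⁻¹ (by positivity)
      have hxne : x ≠ 0 := by
        rintro rfl
        simp only [norm_zero, mul_zero, map_zero] at hxlt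
        exact lt_irrefl 0 hxlt
      have hxpos : 0 < ‖x‖ := norm_pos_iff.2 hxne
      have hcoe : ‖((‖x‖⁻¹ : ℝ) : ℂ)‖ = ‖x‖⁻¹ := by
        rw [Complex.norm_real, Real.norm_eq_abs, abs_of_nonneg (inv_nonneg.2 hxpos.le)]
      refine ⟨((‖x‖⁻¹ : ℝ) : ℂ) • x, M.smul_mem _ hxM, ?_, ?_⟩
      · rw [norm_smul, hcoe, inv_mul_cancel₀ hxpos.ne']
      · rw [_root_.map_smul, norm_smul, hcoe]
        calc ‖x‖⁻¹ * ‖T x‖ < ‖x‖⁻¹ * ((n + 1 : ℝ)⁻¹ * ‖x‖) :=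
              mul_lt_mul_of_pos_left hxlt (inv_pos.2 hxpos)
          _ = (n + 1 : ℝ)⁻¹ := by field_simp
    choose y hyM hy1 hyT using hseq
    have hT0 : Filter.Tendsto (fun n => T (y n)) Filter.atTop (nhds 0) := by
      rw [tendsto_zero_iff_norm_tendsto_zero]
      refine squeeze_zero (fun n => norm_nonneg _) (fun n => (hyT n).le) ?_
      exact tendsto_one_div_add_atTop_nhds_zero_nat.congr (by simp [one_div])
    have hAy : ∀ n, A (y n) ∈ C := fun n =>
      hC ⟨y n, by simp [Metric.mem_closedBall, dist_zero_right, hy1 n], rfl⟩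
    obtain ⟨a, -, φ, hφ, hconv⟩ := hCc.tendsto_subseq hAy
    have hyconv : Filter.Tendsto (fun n => y (φ n)) Filter.atTop (nhds (-a)) := by
      have hrepr : ∀ n, y (φ n) = S (T (y (φ n))) - A (y (φ n)) := by
        intro n
        simp [hA, ContinuousLinearMap.sub_apply, ContinuousLinearMap.comp_apply]
      have hS : Filter.Tendsto (fun n => S (T (y (φ n)))) Filter.atTop (nhds 0) := by
        have := (S.continuous.tendsto 0).comp (hT0.comp hφ.tendsto_atTop)
        simpa [Function.comp_def] using this
      have := hS.sub hconv
      rw [zero_sub] at this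
      exact Filter.Tendsto.congr (fun n => (hrepr n).symm) this
    have hnorm : ‖(-a : H)‖ = 1 := by
      have h1 : Filter.Tendsto (fun n => ‖y (φ n)‖) Filter.atTop (nhds ‖(-a : H)‖) :=
        (continuous_norm.tendsto _).comp hyconv
      have h2 : Filter.Tendsto (fun n => ‖y (φ n)‖) Filter.atTop (nhds 1) := by
        simpa [hy1] using tendsto_const_nhds (α := ℝ) (x := (1:ℝ))
      exact tendsto_nhds_unique h1 h2
    have haM : -a ∈ M :=
      N.isClosed_orthogonal.mem_of_tendsto hyconv
        (Filter.Eventually.of_forall fun n => hyM (φ n))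
    have haN : -a ∈ N := by
      rw [hN, LinearMap.mem_ker]
      have h1 : Filter.Tendsto (fun n => T (y (φ n))) Filter.atTop (nhds (T (-a))) :=
        (T.continuous.tendsto _).comp hyconv
      have h2 : Filter.Tendsto (fun n => T (y (φ n))) Filter.atTop (nhds 0) :=
        hT0.comp hφ.tendsto_atTop
      exact tendsto_nhds_unique h1 h2
    have : (-a : H) = 0 := by
      have := N.orthogonal_disjoint
      exact Submodule.disjoint_def.mp this _ haN haM
    rw [this, norm_zero] at hnorm
    exact zero_ne_one hnorm
  obtain ⟨c, hc, hbound⟩ := hbdd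
  set T' : M →L[ℂ] H := T ∘L M.subtypeL with hT'
  have hanti : AntilipschitzWith (c.toNNReal⁻¹) T' := by
    refine ContinuousLinearMap.antilipschitz_of_bound T' fun x => ?_
    have h1 : c * ‖(x : H)‖ ≤ ‖T (x : H)‖ := hbound x.1 x.2
    calc ‖x‖ = ‖(x : H)‖ := rfl
      _ ≤ c⁻¹ * ‖T (x : H)‖ := by
          rw [← div_eq_inv_mul, le_div_iff₀ hc, mul_comm]
          exact h1
      _ = (c.toNNReal⁻¹ : ℝ) * ‖T' x‖ := by
          rw [Real.coe_toNNReal _ hc.le]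
          rfl
  have hrange_closed : IsClosed (Set.range ⇑T') :=
    hanti.isClosed_range T'.uniformContinuous
  have hrange_eq : Set.range ⇑T' = (LinearMap.range (T : H →ₗ[ℂ] H) : Set H) := by
    ext x
    constructor
    · rintro ⟨m, rfl⟩
      exact ⟨m, rfl⟩
    · rintro ⟨v, rfl⟩
      refine ⟨⟨v - (N.orthogonalProjectionOnto v : H), Submodule.sub_starProjection_mem_orthogonal v⟩, ?_⟩
      have hNv : T ((N.orthogonalProjectionOnto v : H)) = 0 := (N.orthogonalProjectionOnto v).2
      rw [hT', ContinuousLinearMap.comp_apply, Submodule.subtypeL_apply]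
      simp only [map_sub, hNv, sub_zero, ContinuousLinearMap.coe_coe]
  rw [← hrange_eq]
  exact hrange_closed

theorem coker_finiteDimensional (T : H →L[ℂ] H)
    (hclosed : IsClosed (LinearMap.range (T : H →ₗ[ℂ] H) : Set H))
    (hker : FiniteDimensional ℂ (LinearMap.ker ((ContinuousLinearMap.adjoint T) : H →ₗ[ℂ] H))) :
    FiniteDimensional ℂ (H ⧸ LinearMap.range (T : H →ₗ[ℂ] H)) := by
  haveI : CompleteSpace (LinearMap.range (T : H →ₗ[ℂ] H)) := hclosed.completeSpace_coe
  have hcompl : IsCompl (LinearMap.range (T : H →ₗ[ℂ] H)) (LinearMap.range (T : H →ₗ[ℂ] H))ᗮ :=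
    Submodule.isCompl_orthogonal_of_hasOrthogonalProjection
  have horth : (LinearMap.range (T : H →ₗ[ℂ] H))ᗮ = LinearMap.ker ((ContinuousLinearMap.adjoint T) : H →ₗ[ℂ] H) := by
    ext x
    rw [Submodule.mem_orthogonal, LinearMap.mem_ker, ContinuousLinearMap.coe_coe]
    constructor
    · intro hx
      rw [← inner_self_eq_zero (𝕜 := ℂ) (x := ContinuousLinearMap.adjoint T x)]
      rw [ContinuousLinearMap.adjoint_inner_right]
      exact hx _ ⟨_, rfl⟩
    · intro hx u hu
      obtain ⟨v, rfl⟩ := hu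
      rw [ContinuousLinearMap.coe_coe, ← ContinuousLinearMap.adjoint_inner_right, hx, inner_zero_right]
  have e := Submodule.quotientEquivOfIsCompl _ _ hcompl
  haveI : FiniteDimensional ℂ (LinearMap.range (T : H →ₗ[ℂ] H))ᗮ := by rw [horth]; exact hker
  exact Module.Finite.equiv e.symm

end Fredholm

end ToeplitzAux2

open ToeplitzAux ToeplitzAux2 in
/-- For continuous functions `f, g` on the circle, `T_f T_g − T_{fg}` is a compact operator
on the Hardy space; consequently if `f` is invertible in `C(S¹)` then the Toeplitz operator
`T_f` is Fredholm. -/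
theorem toeplitz_comp_sub_toeplitz_mul_isCompact
    (f g : C(AddCircle (2 * Real.pi), ℂ))
    (Mf Mg Mfg : L2Circle →L[ℂ] L2Circle)
    (hMf : ∀ u : L2Circle,
      (Mf u : AddCircle (2 * Real.pi) → ℂ) =ᵐ[haarAddCircle] fun x => f x * u x)
    (hMg : ∀ u : L2Circle,
      (Mg u : AddCircle (2 * Real.pi) → ℂ) =ᵐ[haarAddCircle] fun x => g x * u x)
    (hMfg : ∀ u : L2Circle,
      (Mfg u : AddCircle (2 * Real.pi) → ℂ) =ᵐ[haarAddCircle] fun x => f x * g x * u x) :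
    IsCompactOperator ⇑(toeplitz Mf ∘L toeplitz Mg - toeplitz Mfg) ∧
      ((∀ x, f x ≠ 0) → IsFredholm (toeplitz Mf)) := by
  have hMf' : Mf = mulOp f := mulOp_unique hMf
  have hMg' : Mg = mulOp g := mulOp_unique hMg
  have hMfg' : Mfg = mulOp (f * g) :=
    mulOp_unique fun u => (hMfg u).trans
      (Filter.Eventually.of_forall fun x => by simp [mul_assoc])
  subst hMf' hMg' hMfg'
  constructor
  · exact toeplitz_mul_sub_isCompact f g
  · intro hfne
    set finv : C(AddCircle (2 * Real.pi), ℂ) :=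
      ⟨fun x => (f x)⁻¹, f.continuous.inv₀ hfne⟩ with hfinvdef
    have h1 : finv * f = 1 := by
      ext x
      exact inv_mul_cancel₀ (hfne x)
    have h2 : f * finv = 1 := by
      ext x
      exact mul_inv_cancel₀ (hfne x)
    have hcompactST : IsCompactOperator
        ⇑(toeplitz (mulOp finv) ∘L toeplitz (mulOp f) - 1) := by
      have := toeplitz_mul_sub_isCompact finv f
      rwa [h1, mulOp_one, toeplitz_id] at this
    have hstar : star finv * star f = 1 := by
      rw [← star_mul, h2, star_one]
    have hcompact2 : IsCompactOperator
        ⇑(toeplitz (mulOp (star finv)) ∘L toeplitz (mulOp (star f)) - 1) := by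
      have := toeplitz_mul_sub_isCompact (star finv) (star f)
      rwa [hstar, mulOp_one, toeplitz_id] at this
    have hkeradj : FiniteDimensional ℂ
        (LinearMap.ker ((ContinuousLinearMap.adjoint (toeplitz (mulOp f))) : hardySpace →ₗ[ℂ] hardySpace)) := by
      rw [adjoint_toeplitz, adjoint_mulOp]
      exact ker_finiteDimensional _ _ hcompact2
    exact ⟨ker_finiteDimensional _ _ hcompactST,
      range_isClosed _ _ hcompactST,
      coker_finiteDimensional _ (range_isClosed _ _ hcompactST) hkeradj⟩
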